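/- Fix x ∈ [0,1] and define the sequence of functions q^h(y|x) on [0,1] by q⁰(y|x) = 1 and q^{h+1}(y|x) = x·y·q^h(y|x) + 1 − x·E[Y·q^h(Y|x)], where Y has law ρ on [0,1]. Then for all h ≥ 0, q^h(y|x) = 1 + Σ_{j=1}^{h} x^j·g^j(y), where g¹(y) = y − E[Y] and g^{j+1}(y) = y·g^j(y) − E[Y·g^j(Y)]. -/

import Mathlib

open MeasureTheory

theorem stmt6 (ρ : Measure ℝ) [IsProbabilityMeasure ρ]
    (hsupp : ∀ᵐ y ∂ρ, y ∈ Set.Icc (0:ℝ) 1)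
    (x : ℝ) (hx : x ∈ Set.Icc (0:ℝ) 1)
    (g : ℕ → ℝ → ℝ)
    (hg1 : ∀ y, g 1 y = y - ∫ z, z ∂ρ)
    (hgrec : ∀ j : ℕ, 1 ≤ j → ∀ y, g (j+1) y = y * g j y - ∫ z, z * g j z ∂ρ)
    (q : ℕ → ℝ → ℝ)
    (hq0 : ∀ y, q 0 y = 1)
    (hqrec : ∀ h : ℕ, ∀ y, q (h+1) y = x * y * q h y + 1 - x * ∫ z, z * q h z ∂ρ) :
    ∀ h : ℕ, ∀ y : ℝ, q h y = 1 + ∑ j ∈ Finset.Icc 1 h, x ^ j * g j y := by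
  -- every continuous function is ρ-integrable (ρ is a prob. measure a.e. on [0,1])
  have hint : ∀ f : ℝ → ℝ, Continuous f → Integrable f ρ := by
    intro f hf
    obtain ⟨M, hM⟩ := (isCompact_Icc (a := (0:ℝ)) (b := 1)).exists_bound_of_continuousOn
      hf.continuousOn
    refine (integrable_const M).mono' hf.aestronglyMeasurable ?_
    filter_upwards [hsupp] with y hy using hM y hy
  -- continuity of g j for j ≥ 1
  have hgcont : ∀ j : ℕ, 1 ≤ j → Continuous (g j) := by
    intro j hj
    induction j with
    | zero => omega
    | succ n ih =>
      rcases Nat.eq_or_lt_of_le hj with h1 | h1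
      · have : g 1 = fun y => y - ∫ z, z ∂ρ := funext hg1
        rw [← h1, this]
        exact continuous_id.sub continuous_const
      · have hn : 1 ≤ n := by omega
        have : g (n+1) = fun y => y * g n y - ∫ z, z * g n z ∂ρ :=
          funext (hgrec n hn)
        rw [this]
        exact ((continuous_id.mul (ih hn)).sub continuous_const)
  -- convert Icc sums to range sums
  have hIcc : ∀ (m : ℕ) (f : ℕ → ℝ),
      ∑ j ∈ Finset.Icc 1 m, f j = ∑ i ∈ Finset.range m, f (i+1) := by
    intro m f
    induction m with
    | zero => simp
    | succ k ihk =>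
      rw [Finset.sum_Icc_succ_top (by omega : 1 ≤ k+1), ihk, Finset.sum_range_succ]
  intro h
  induction h with
  | zero => intro y; simp [hq0]
  | succ n ih =>
    intro y
    rw [hqrec n y]
    -- integral of z * q n z
    have hintg : ∀ i : ℕ, Integrable (fun z => z * g (i+1) z) ρ :=
      fun i => hint _ (continuous_id.mul (hgcont (i+1) (by omega)))
    have hIq : ∫ z, z * q n z ∂ρ
        = (∫ z, z ∂ρ) + ∑ i ∈ Finset.range n, x ^ (i+1) * ∫ z, z * g (i+1) z ∂ρ := by
      have heq : (fun z => z * q n z)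
          = fun z => z + ∑ i ∈ Finset.range n, x ^ (i+1) * (z * g (i+1) z) := by
        funext z
        rw [ih z, hIcc n (fun j => x ^ j * g j z)]
        rw [mul_add, mul_one, Finset.mul_sum]
        congr 1
        exact Finset.sum_congr rfl (fun i _ => by ring)
      have hid : Integrable (fun z : ℝ => z) ρ := hint _ continuous_id
      rw [heq, integral_add hid
        (integrable_finset_sum _ (fun i _ => (hintg i).const_mul _))]
      congr 1
      rw [integral_finset_sum _ (fun i _ => (hintg i).const_mul _)]
      exact Finset.sum_congr rfl (fun i _ => integral_const_mul _ _)
    rw [hIq, ih y, hIcc n (fun j => x ^ j * g j y),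
      hIcc (n+1) (fun j => x ^ j * g j y), Finset.sum_range_succ']
    -- rewrite the top sum using the recursion for g
    have hC : ∑ i ∈ Finset.range n, x ^ (i+1+1) * g (i+1+1) y
        = x * y * (∑ i ∈ Finset.range n, x ^ (i+1) * g (i+1) y)
          - x * ∑ i ∈ Finset.range n, x ^ (i+1) * ∫ z, z * g (i+1) z ∂ρ := by
      rw [Finset.mul_sum, Finset.mul_sum, ← Finset.sum_sub_distrib]
      refine Finset.sum_congr rfl (fun i _ => ?_)
      rw [hgrec (i+1) (by omega) y]
      ring
    rw [hC, hg1 y]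
    ring
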